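/- Every polynomial function p : ℝ → ℂ is finitely 2-refinable: there exist a finite set S ⊆ ℤ and complex coefficients (α_ℓ)_{ℓ ∈ S} such that p(x) = Σ_{ℓ ∈ S} α_ℓ · p(2·x − ℓ) for all real x. -/

import Mathlib

open Polynomial

lemma diff_natDegree (q : ℂ[X]) (n : ℕ) (h : q.natDegree = n + 1) (hq : q ≠ 0) :
    (q - q.comp (X - C 1)).natDegree = n ∧ q - q.comp (X - C 1) ≠ 0 := by
  set d := q - q.comp (X - C 1) with hd
  have htay : q.comp (X - C 1) = Polynomial.taylor (-1) q := by
    rw [Polynomial.taylor_apply]; simp [sub_eq_add_neg]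
  have hcoeff : ∀ k, d.coeff k = q.coeff k - (Polynomial.hasseDeriv k q).eval (-1) := by
    intro k
    rw [hd, Polynomial.coeff_sub, htay, Polynomial.taylor_coeff]
  have hlead : q.coeff (n + 1) ≠ 0 := by
    rw [← h]; exact Polynomial.leadingCoeff_ne_zero.mpr hq
  -- coeff at n
  have hn : d.coeff n = (n + 1 : ℂ) * q.coeff (n + 1) := by
    have h1 : (Polynomial.hasseDeriv n q).natDegree ≤ 1 := by
      have := Polynomial.natDegree_hasseDeriv_le q n
      omega
    have heq := Polynomial.eq_X_add_C_of_natDegree_le_one h1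
    have hc0 : (Polynomial.hasseDeriv n q).coeff 0 = q.coeff n := by
      rw [Polynomial.hasseDeriv_coeff]; simp
    have hc1 : (Polynomial.hasseDeriv n q).coeff 1 = (n + 1 : ℂ) * q.coeff (n + 1) := by
      rw [Polynomial.hasseDeriv_coeff]
      have : (1 + n).choose n = n + 1 := by
        rw [Nat.add_comm]; exact Nat.choose_succ_self_right n
      rw [this, Nat.add_comm]
      push_cast; ring
    rw [hcoeff n, heq]
    simp [hc0, hc1]
    try ring
  -- coeff at k > n is zero
  have hhigh : ∀ k, n < k → d.coeff k = 0 := by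
    intro k hk
    rcases eq_or_lt_of_le (Nat.succ_le_of_lt hk) with hk1 | hk1
    · -- k = n + 1
      have hk1' : k = n + 1 := by omega
      subst hk1'
      have h0 : (Polynomial.hasseDeriv (n+1) q).natDegree ≤ 0 := by
        have := Polynomial.natDegree_hasseDeriv_le q (n+1)
        omega
      have heq := Polynomial.eq_C_of_natDegree_le_zero h0
      have hc0 : (Polynomial.hasseDeriv (n+1) q).coeff 0 = q.coeff (n+1) := by
        rw [Polynomial.hasseDeriv_coeff]; simp
      rw [hcoeff, heq, hc0]
      simp
    · -- k > n + 1
      have hq1 : q.coeff k = 0 := Polynomial.coeff_eq_zero_of_natDegree_lt (by omega)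
      have hq2 : ((Polynomial.taylor (-1)) q).coeff k = 0 :=
        Polynomial.coeff_eq_zero_of_natDegree_lt (by rw [Polynomial.natDegree_taylor]; omega)
      rw [hcoeff, hq1, ← Polynomial.taylor_coeff, hq2]
      simp
  have hdn : d.coeff n ≠ 0 := by
    rw [hn]
    exact mul_ne_zero (Nat.cast_add_one_ne_zero n) hlead
  have hne : d ≠ 0 := fun h0 => hdn (by simp [h0])
  constructor
  · refine le_antisymm ?_ (Polynomial.le_natDegree_of_ne_zero hdn)
    exact Polynomial.natDegree_le_iff_coeff_eq_zero.mpr hhigh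
  · exact hne

noncomputable def Mspan (q : ℂ[X]) : Submodule ℂ ℂ[X] :=
  Submodule.span ℂ (Set.range fun m : ℤ => q.comp (X - C (m : ℂ)))

lemma self_mem_Mspan (q : ℂ[X]) : q ∈ Mspan q :=
  Submodule.subset_span ⟨0, by simp⟩

lemma diff_Mspan_le (q : ℂ[X]) : Mspan (q - q.comp (X - C 1)) ≤ Mspan q := by
  rw [Mspan, Submodule.span_le]
  rintro _ ⟨m, rfl⟩
  beta_reduce
  have hcomp : (q - q.comp (X - C 1)).comp (X - C (m : ℂ)) =
      q.comp (X - C (m : ℂ)) - q.comp (X - C ((m + 1 : ℤ) : ℂ)) := by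
    rw [Polynomial.sub_comp, Polynomial.comp_assoc]
    congr 2
    simp [Polynomial.sub_comp]
    ring
  rw [hcomp]
  exact sub_mem (Submodule.subset_span ⟨m, rfl⟩) (Submodule.subset_span ⟨m + 1, rfl⟩)

lemma key_span : ∀ n : ℕ, ∀ q : ℂ[X], q ≠ 0 → q.natDegree ≤ n →
    ∀ r : ℂ[X], r.natDegree ≤ q.natDegree → r ∈ Mspan q := by
  intro n
  induction n with
  | zero =>
    intro q hq hqn r hr
    have hq0 : q.natDegree = 0 := Nat.le_zero.mp hqn
    have hr0 : r.natDegree = 0 := Nat.le_zero.mp (hr.trans hq0.le)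
    obtain ⟨a, rfl⟩ := Polynomial.natDegree_eq_zero.mp hq0
    obtain ⟨b, rfl⟩ := Polynomial.natDegree_eq_zero.mp hr0
    have ha : a ≠ 0 := fun h => hq (by rw [h, map_zero])
    have : (C b : ℂ[X]) = (b / a) • C a := by
      rw [Polynomial.smul_C, smul_eq_mul, div_mul_cancel₀ _ ha]
    rw [this]
    exact Submodule.smul_mem _ _ (self_mem_Mspan _)
  | succ n ih =>
    intro q hq hqn r hr
    rcases Nat.lt_or_ge q.natDegree (n + 1) with hlt | hge
    · exact ih q hq (by omega) r hr
    have hdeg : q.natDegree = n + 1 := le_antisymm hqn hge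
    obtain ⟨hdn, hdne⟩ := diff_natDegree q n hdeg hq
    set d := q - q.comp (X - C 1) with hd
    -- split r
    set c : ℂ := r.coeff (n + 1) / q.coeff (n + 1) with hc
    set s : ℂ[X] := r - c • q with hs
    have hlead : q.coeff (n + 1) ≠ 0 := by
      rw [← hdeg]; exact Polynomial.leadingCoeff_ne_zero.mpr hq
    have hstop : s.coeff (n + 1) = 0 := by
      rw [hs, Polynomial.coeff_sub, Polynomial.coeff_smul, smul_eq_mul, hc,
        div_mul_cancel₀ _ hlead, sub_self]
    have hsle : s.natDegree ≤ n := by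
      refine Polynomial.natDegree_le_iff_coeff_eq_zero.mpr fun m hm => ?_
      rcases eq_or_lt_of_le (Nat.succ_le_of_lt hm) with h1 | h1
      · rw [← h1]; exact hstop
      · rw [hs, Polynomial.coeff_sub, Polynomial.coeff_smul, smul_eq_mul,
          Polynomial.coeff_eq_zero_of_natDegree_lt (lt_of_le_of_lt hr (by omega)),
          Polynomial.coeff_eq_zero_of_natDegree_lt (by omega), mul_zero, sub_self]
    have hsmem : s ∈ Mspan q := by
      refine diff_Mspan_le q (ih d hdne (le_of_eq hdn) s ?_)
      rw [hdn]; exact hsle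
    have : r = s + c • q := by rw [hs]; ring
    rw [this]
    exact add_mem hsmem (Submodule.smul_mem _ _ (self_mem_Mspan q))

/-- Every polynomial function `p : ℝ → ℂ` is finitely `2`-refinable: there
exist a finite set `S ⊆ ℤ` and complex coefficients `(α ℓ)_{ℓ ∈ S}` such that
`p x = Σ_{ℓ ∈ S} α ℓ · p (2·x − ℓ)` for all real `x`. -/
theorem polynomial_finitely_two_refinable
    (q : Polynomial ℂ) (p : ℝ → ℂ) (hpq : ∀ x : ℝ, p x = q.eval (x : ℂ)) :
    ∃ (S : Finset ℤ) (α : ℤ → ℂ),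
      ∀ x : ℝ, p x = ∑ ℓ ∈ S, α ℓ * p (2 * x - (ℓ : ℝ)) := by
  rcases eq_or_ne q 0 with rfl | hq
  · exact ⟨∅, 0, fun x => by simp [hpq x]⟩
  set Q : ℂ[X] := q.comp (C 2 * X) with hQdef
  have hQne : Q ≠ 0 := by
    rw [hQdef]
    simp only [ne_eq, Polynomial.comp_eq_zero_iff]
    push_neg
    refine ⟨hq, fun _ => ?_⟩
    intro h
    have := congrArg (Polynomial.coeff · 1) h
    simp at this
  have hQdeg : Q.natDegree = q.natDegree := by
    rw [hQdef, Polynomial.natDegree_comp]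
    have : (C (2:ℂ) * X).natDegree = 1 := by
      simp [Polynomial.natDegree_C_mul_X (2:ℂ) two_ne_zero]
    rw [this, mul_one]
  have hmem : q ∈ Mspan Q :=
    key_span Q.natDegree Q hQne le_rfl q (by rw [hQdeg])
  rw [Mspan, Finsupp.mem_span_range_iff_exists_finsupp] at hmem
  obtain ⟨c, hc⟩ := hmem
  refine ⟨c.support.map ⟨fun m => 2 * m, mul_right_injective₀ two_ne_zero⟩,
    fun ℓ => c (ℓ / 2), fun x => ?_⟩
  rw [Finset.sum_map]
  simp only [Function.Embedding.coeFn_mk]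
  have hα : ∀ m : ℤ, (2 * m) / 2 = m := fun m => Int.mul_ediv_cancel_left m two_ne_zero
  rw [hpq x, ← hc, Finsupp.sum]
  rw [Polynomial.eval_finset_sum]
  refine Finset.sum_congr rfl fun m _ => ?_
  rw [hα m, hpq, Polynomial.eval_smul, smul_eq_mul]
  congr 1
  rw [hQdef, Polynomial.eval_comp, Polynomial.eval_comp]
  push_cast
  congr 1
  simp
  ring
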